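/- There exists a constant C > 0 such that for all coprime positive integers a, b with ab ≠ 1 and every real B ≥ 1, the quantity M_{a,b}(B) differs by at most C from the number of pairs (s,t) ∈ ℤ² satisfying: gcd(s,t) = 1; s·(s − at) ≠ 0; 2as ≠ (a² − b²)t; t > 0; Q₃(s,t) < 0; and for j = 1, 2, Q_j(s,t) < 0 and max{a,b}·(−Q_j(s,t)) ≤ λ·B, where λ = gcd(Q₁(s,t), Q₂(s,t)). -/

import Mathlib

open scoped Classical

/-- `Q₁(s,t) = 2s² + (a² − b²)t² − 4ast`. -/
def Q1 (a b s t : ℤ) : ℤ := 2 * s ^ 2 + (a ^ 2 - b ^ 2) * t ^ 2 - 4 * a * s * t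

/-- `Q₂(s,t) = −2s² + (a² − b²)t²`. -/
def Q2 (a b s t : ℤ) : ℤ := -2 * s ^ 2 + (a ^ 2 - b ^ 2) * t ^ 2

/-- `Q₃(s,t) = −2as² + 2(a² − b²)st − a(a² − b²)t²`. -/
def Q3 (a b s t : ℤ) : ℤ :=
  -2 * a * s ^ 2 + 2 * (a ^ 2 - b ^ 2) * s * t - a * (a ^ 2 - b ^ 2) * t ^ 2

/-- `M_{a,b}(B)`: the number of positive integer triples `(x,y,z)` with
`(a²−b²)x² + (a²+b²)y² = 2z²`, `gcd(x,y) = 1` and `max{a,b}·max{x,y} ≤ B`. -/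
noncomputable def Mcount (a b : ℤ) (B : ℝ) : ℕ :=
  Set.ncard {p : ℤ × ℤ × ℤ |
    0 < p.1 ∧ 0 < p.2.1 ∧ 0 < p.2.2 ∧
    (a ^ 2 - b ^ 2) * p.1 ^ 2 + (a ^ 2 + b ^ 2) * p.2.1 ^ 2 = 2 * p.2.2 ^ 2 ∧
    Int.gcd p.1 p.2.1 = 1 ∧
    ((max a b : ℤ) : ℝ) * ((max p.1 p.2.1 : ℤ) : ℝ) ≤ B}

/- ### Auxiliary definitions and lemmas -/

noncomputable def fm (a b : ℤ) (p : ℤ × ℤ) : ℤ × ℤ × ℤ :=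
  ( -Q1 a b p.1 p.2 / (Int.gcd (Q1 a b p.1 p.2) (Q2 a b p.1 p.2) : ℤ),
    -Q2 a b p.1 p.2 / (Int.gcd (Q1 a b p.1 p.2) (Q2 a b p.1 p.2) : ℤ),
    -Q3 a b p.1 p.2 / (Int.gcd (Q1 a b p.1 p.2) (Q2 a b p.1 p.2) : ℤ) )

def Sset (a b : ℤ) (B : ℝ) : Set (ℤ × ℤ) :=
  {p : ℤ × ℤ |
    Int.gcd p.1 p.2 = 1 ∧
    p.1 * (p.1 - a * p.2) ≠ 0 ∧
    2 * a * p.1 ≠ (a ^ 2 - b ^ 2) * p.2 ∧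
    0 < p.2 ∧
    Q3 a b p.1 p.2 < 0 ∧
    Q1 a b p.1 p.2 < 0 ∧ Q2 a b p.1 p.2 < 0 ∧
    ((max a b : ℤ) : ℝ) * ((-Q1 a b p.1 p.2 : ℤ) : ℝ) ≤
      (Int.gcd (Q1 a b p.1 p.2) (Q2 a b p.1 p.2) : ℝ) * B ∧
    ((max a b : ℤ) : ℝ) * ((-Q2 a b p.1 p.2 : ℤ) : ℝ) ≤
      (Int.gcd (Q1 a b p.1 p.2) (Q2 a b p.1 p.2) : ℝ) * B}

def Mset (a b : ℤ) (B : ℝ) : Set (ℤ × ℤ × ℤ) :=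
  {p : ℤ × ℤ × ℤ |
    0 < p.1 ∧ 0 < p.2.1 ∧ 0 < p.2.2 ∧
    (a ^ 2 - b ^ 2) * p.1 ^ 2 + (a ^ 2 + b ^ 2) * p.2.1 ^ 2 = 2 * p.2.2 ^ 2 ∧
    Int.gcd p.1 p.2.1 = 1 ∧
    ((max a b : ℤ) : ℝ) * ((max p.1 p.2.1 : ℤ) : ℝ) ≤ B}

lemma id_main (a b s t : ℤ) :
    (a^2-b^2) * (Q1 a b s t)^2 + (a^2+b^2) * (Q2 a b s t)^2 = 2 * (Q3 a b s t)^2 := by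
  unfold Q1 Q2 Q3; ring

lemma id_t (a b s t : ℤ) :
    t * Q3 a b s t = s * Q1 a b s t + (s - a*t) * Q2 a b s t := by unfold Q1 Q2 Q3; ring

lemma id_2s (a b s t : ℤ) :
    2*s * Q3 a b s t = (a^2-b^2)*t * Q1 a b s t + (2*a*s - (a^2-b^2)*t) * Q2 a b s t := by
  unfold Q1 Q2 Q3; ring

lemma id_even (a b s u : ℤ) :
    s * Q3 a b s (2*u) = (a^2-b^2)*u * Q1 a b s (2*u) + (a*s - (a^2-b^2)*u) * Q2 a b s (2*u) := by
  unfold Q1 Q2 Q3; ring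

lemma id_diff (a b s t : ℤ) : Q1 a b s t - Q2 a b s t = 4 * (s * (s - a*t)) := by
  unfold Q1 Q2; ring

lemma id_sum (a b s t : ℤ) :
    Q1 a b s t + Q2 a b s t = 2 * (t * ((a^2-b^2)*t - 2*a*s)) := by
  unfold Q1 Q2; ring

lemma id_az (a b s t : ℤ) : a * Q2 a b s t - Q3 a b s t = 2 * (a^2-b^2) * t * (a*t - s) := by
  unfold Q2 Q3; ring

lemma gcd_dvd_Q3 (a b s t : ℤ) (h : Int.gcd s t = 1) :
    (Int.gcd (Q1 a b s t) (Q2 a b s t) : ℤ) ∣ Q3 a b s t := by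
  set g : ℤ := (Int.gcd (Q1 a b s t) (Q2 a b s t) : ℤ) with hg
  have h1 : g ∣ Q1 a b s t := Int.gcd_dvd_left _ _
  have h2 : g ∣ Q2 a b s t := Int.gcd_dvd_right _ _
  have ht : g ∣ t * Q3 a b s t := by
    rw [id_t]; exact dvd_add (h1.mul_left s) (h2.mul_left _)
  have hco : IsCoprime s t := Int.isCoprime_iff_gcd_eq_one.mpr h
  rcases Int.even_or_odd t with ⟨u, hu⟩ | ⟨u, hu⟩
  · have hs : g ∣ s * Q3 a b s t := by
      have := id_even a b s u
      rw [hu, show u + u = 2*u by ring]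
      rw [show s * Q3 a b s (2*u) = (a^2-b^2)*u * Q1 a b s (2*u) + (a*s - (a^2-b^2)*u) * Q2 a b s (2*u) from this]
      rw [hu, show u + u = 2*u by ring] at h1 h2
      exact dvd_add (h1.mul_left _) (h2.mul_left _)
    obtain ⟨α, β, hαβ⟩ := hco
    have : Q3 a b s t = α * (s * Q3 a b s t) + β * (t * Q3 a b s t) := by
      linear_combination (Q3 a b s t) * hαβ.symm
    rw [this]; exact dvd_add (hs.mul_left _) (ht.mul_left _)
  · have hs2 : g ∣ 2*s * Q3 a b s t := by
      rw [id_2s]; exact dvd_add (h1.mul_left _) (h2.mul_left _)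
    have hco2 : IsCoprime (2*s) t := by
      refine IsCoprime.mul_left ⟨-u, 1, by rw [hu]; ring⟩ hco
    obtain ⟨α, β, hαβ⟩ := hco2
    have : Q3 a b s t = α * (2*s * Q3 a b s t) + β * (t * Q3 a b s t) := by
      linear_combination (Q3 a b s t) * hαβ.symm
    rw [this]; exact dvd_add (hs2.mul_left _) (ht.mul_left _)

lemma forward (a b s t : ℤ) (hst : Int.gcd s t = 1) (h1 : Q1 a b s t ≠ 0) :
    ∃ x y z : ℤ, 0 < (Int.gcd (Q1 a b s t) (Q2 a b s t) : ℤ) ∧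
      Q1 a b s t = -(Int.gcd (Q1 a b s t) (Q2 a b s t) : ℤ) * x ∧
      Q2 a b s t = -(Int.gcd (Q1 a b s t) (Q2 a b s t) : ℤ) * y ∧
      Q3 a b s t = -(Int.gcd (Q1 a b s t) (Q2 a b s t) : ℤ) * z ∧
      Int.gcd x y = 1 ∧ fm a b (s, t) = (x, y, z) := by
  have hgne0 : Int.gcd (Q1 a b s t) (Q2 a b s t) ≠ 0 :=
    fun h => h1 ((Int.gcd_eq_zero_iff.mp h).1)
  set g : ℤ := (Int.gcd (Q1 a b s t) (Q2 a b s t) : ℤ) with hg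
  have hgpos : 0 < g := by positivity
  have hgne : g ≠ 0 := hgpos.ne'
  obtain ⟨x1, hx1⟩ : g ∣ Q1 a b s t := Int.gcd_dvd_left _ _
  obtain ⟨y1, hy1⟩ : g ∣ Q2 a b s t := Int.gcd_dvd_right _ _
  obtain ⟨z1, hz1⟩ : g ∣ Q3 a b s t := gcd_dvd_Q3 a b s t hst
  refine ⟨-x1, -y1, -z1, hgpos, by rw [hx1]; ring, by rw [hy1]; ring, by rw [hz1]; ring, ?_, ?_⟩
  · have hmul : Int.gcd (Q1 a b s t) (Q2 a b s t) = g.natAbs * Int.gcd x1 y1 := by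
      rw [hx1, hy1]; exact Int.gcd_mul_left g x1 y1
    have h2 : Int.gcd x1 y1 = 1 := by
      have hnat : g.natAbs = Int.gcd (Q1 a b s t) (Q2 a b s t) := by simp [hg]
      have hna : 0 < g.natAbs := Int.natAbs_pos.mpr hgne
      have h' : g.natAbs * 1 = g.natAbs * Int.gcd x1 y1 := by omega
      have := Nat.eq_of_mul_eq_mul_left hna h'
      omega
    simpa [Int.neg_gcd, Int.gcd_neg] using h2
  · have e1 : -Q1 a b s t / g = -x1 := by rw [hx1, ← mul_neg, Int.mul_ediv_cancel_left _ hgne]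
    have e2 : -Q2 a b s t / g = -y1 := by rw [hy1, ← mul_neg, Int.mul_ediv_cancel_left _ hgne]
    have e3 : -Q3 a b s t / g = -z1 := by rw [hz1, ← mul_neg, Int.mul_ediv_cancel_left _ hgne]
    simp only [fm, ← hg, e1, e2, e3]

lemma coprime_of_div (u v s0 t0 : ℤ) (hgne : (Int.gcd u v : ℤ) ≠ 0)
    (hu : u = (Int.gcd u v : ℤ) * s0) (hv : v = (Int.gcd u v : ℤ) * t0) :
    Int.gcd s0 t0 = 1 := by
  set g : ℤ := (Int.gcd u v : ℤ) with hg
  have hmul : Int.gcd u v = g.natAbs * Int.gcd s0 t0 := by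
    rw [hu, hv]; exact Int.gcd_mul_left g s0 t0
  have hna : 0 < g.natAbs := Int.natAbs_pos.mpr hgne
  have hnat : g.natAbs = Int.gcd u v := by simp [hg]
  have hga : g.natAbs * 1 = g.natAbs * Int.gcd s0 t0 := by omega
  exact (Nat.eq_of_mul_eq_mul_left hna hga).symm

lemma W_neg (a b x y z : ℤ) (ha : 0 < a) (hx : 0 < x) (hy : 0 < y) (hz : 0 < z)
    (hD : a^2 - b^2 ≠ 0) (hxy : x ≠ y)
    (heq : (a^2-b^2)*x^2 + (a^2+b^2)*y^2 = 2*z^2) :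
    (a^2-b^2) * ((a^2-b^2)*x + (a^2+b^2)*y - 2*a*z) < 0 := by
  have hxy0 : x - y ≠ 0 := sub_ne_zero.mpr hxy
  have hsq : 0 < (x - y)^2 := by positivity
  have hE : (0:ℤ) < a^2 + b^2 := by positivity
  have hEy : 0 < (a^2+b^2) * y := mul_pos hE hy
  have hkey : ((a^2-b^2)*x + (a^2+b^2)*y)^2 + (a^2-b^2)*(a^2+b^2)*(x-y)^2 = 4*a^2*z^2 := by
    linear_combination (2*a^2) * heq
  have haz : 0 < 2*a*z := by positivity
  have hP : 0 < (a^2-b^2)*x + (a^2+b^2)*y := by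
    rcases hD.lt_or_gt with hDneg | hDpos
    · have h1 : ((a^2+b^2)*y)*((a^2+b^2)*y) - ((a^2-b^2)*x)*((a^2-b^2)*x)
          = 2*(a^2+b^2)*z^2 - 2*a^2*((a^2-b^2)*x^2) := by linear_combination (a^2+b^2) * heq
      have hDx2 : (a^2-b^2) * x^2 < 0 := mul_neg_of_neg_of_pos hDneg (by positivity)
      have h2 : 0 < ((a^2+b^2)*y)*((a^2+b^2)*y) - ((a^2-b^2)*x)*((a^2-b^2)*x) := by
        nlinarith [mul_pos hE (mul_pos hz hz), mul_pos ha ha]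
      have hDx : (a^2-b^2) * x < 0 := mul_neg_of_neg_of_pos hDneg hx
      nlinarith [h2, hEy, hDx]
    · have h1 : 0 < (a^2-b^2) * x := mul_pos hDpos hx
      linarith
  rcases hD.lt_or_gt with hDneg | hDpos
  · have hDE : (a^2-b^2)*(a^2+b^2)*(x-y)^2 < 0 :=
      mul_neg_of_neg_of_pos (mul_neg_of_neg_of_pos hDneg hE) hsq
    have hW : 0 < (a^2-b^2)*x + (a^2+b^2)*y - 2*a*z := by nlinarith [hkey, hDE, hP, haz]
    exact mul_neg_of_neg_of_pos hDneg hW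
  · have hDE : 0 < (a^2-b^2)*(a^2+b^2)*(x-y)^2 := mul_pos (mul_pos hDpos hE) hsq
    have hW : (a^2-b^2)*x + (a^2+b^2)*y - 2*a*z < 0 := by nlinarith [hkey, hDE, hP, haz]
    exact mul_neg_of_pos_of_neg hDpos hW

lemma mapsTo (a b : ℤ) (B : ℝ) :
    Set.MapsTo (fm a b) (Sset a b B) (Mset a b B \ {((1:ℤ), (1:ℤ), a)}) := by
  rintro ⟨s, t⟩ hp
  obtain ⟨hst, hnd1, hnd2, htpos, h3, h1, h2, hB1, hB2⟩ := hp
  obtain ⟨x, y, z, hgpos, e1, e2, e3, hxy, hfm⟩ := forward a b s t hst h1.ne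
  rw [hfm]
  set g : ℤ := (Int.gcd (Q1 a b s t) (Q2 a b s t) : ℤ) with hg
  have hgR : ((Int.gcd (Q1 a b s t) (Q2 a b s t) : ℕ) : ℝ) = ((g : ℤ) : ℝ) := by
    rw [hg]; push_cast; ring
  have hx : 0 < x := by
    rcases mul_pos_iff.mp (show 0 < g * x by linarith [e1, h1]) with ⟨_, h⟩ | ⟨h, _⟩
    · exact h
    · linarith
  have hy : 0 < y := by
    rcases mul_pos_iff.mp (show 0 < g * y by linarith [e2, h2]) with ⟨_, h⟩ | ⟨h, _⟩
    · exact h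
    · linarith
  have hz : 0 < z := by
    rcases mul_pos_iff.mp (show 0 < g * z by linarith [e3, h3]) with ⟨_, h⟩ | ⟨h, _⟩
    · exact h
    · linarith
  have hBx : ((max a b : ℤ) : ℝ) * (x : ℝ) ≤ B := by
    have hgx : ((-Q1 a b s t : ℤ) : ℝ) = (g : ℝ) * (x : ℝ) := by
      rw [e1]; push_cast; ring
    rw [hgx, hgR] at hB1
    have : (g : ℝ) * (((max a b : ℤ) : ℝ) * (x : ℝ)) ≤ (g : ℝ) * B := by
      ring_nf; ring_nf at hB1; linarith
    exact le_of_mul_le_mul_left this (by exact_mod_cast hgpos)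
  have hBy : ((max a b : ℤ) : ℝ) * (y : ℝ) ≤ B := by
    have hgy : ((-Q2 a b s t : ℤ) : ℝ) = (g : ℝ) * (y : ℝ) := by
      rw [e2]; push_cast; ring
    rw [hgy, hgR] at hB2
    have : (g : ℝ) * (((max a b : ℤ) : ℝ) * (y : ℝ)) ≤ (g : ℝ) * B := by
      ring_nf; ring_nf at hB2; linarith
    exact le_of_mul_le_mul_left this (by exact_mod_cast hgpos)
  constructor
  · refine ⟨hx, hy, hz, ?_, hxy, ?_⟩
    · have H := id_main a b s t
      rw [e1, e2, e3] at H
      have H2 : g^2 * ((a^2-b^2) * x^2 + (a^2+b^2) * y^2) = g^2 * (2 * z^2) := by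
        linear_combination H
      exact mul_left_cancel₀ (pow_ne_zero 2 hgpos.ne') H2
    · have : ((max x y : ℤ) : ℝ) = max (x : ℝ) (y : ℝ) := by push_cast; rfl
      rw [this]
      rcases max_cases (x : ℝ) (y : ℝ) with ⟨hm, _⟩ | ⟨hm, _⟩ <;> rw [hm]
      · exact hBx
      · exact hBy
  · simp only [Set.mem_singleton_iff, Prod.mk.injEq, not_and]
    intro hx1 hy1
    exfalso
    apply hnd1
    have : (4 : ℤ) * (s * (s - a*t)) = 0 := by
      rw [← id_diff, e1, e2, hx1, hy1]; ring
    linarith [this]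

lemma injOn (a b : ℤ) (hD : a^2 - b^2 ≠ 0) (B : ℝ) :
    Set.InjOn (fm a b) (Sset a b B) := by
  rintro ⟨s, t⟩ hp ⟨s', t'⟩ hq hfe
  obtain ⟨hst, hnd1, -, htpos, -, h1, -, -, -⟩ := hp
  obtain ⟨hst', hnd1', -, htpos', -, h1', -, -, -⟩ := hq
  obtain ⟨x, y, z, hgpos, e1, e2, e3, -, hfm⟩ := forward a b s t hst h1.ne
  obtain ⟨x', y', z', hgpos', e1', e2', e3', -, hfm'⟩ := forward a b s' t' hst' h1'.ne
  rw [hfm, hfm'] at hfe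
  obtain ⟨rfl, rfl, rfl⟩ : x = x' ∧ y = y' ∧ z = z' := by
    simpa [Prod.ext_iff] using hfe
  set g : ℤ := (Int.gcd (Q1 a b s t) (Q2 a b s t) : ℤ)
  set g' : ℤ := (Int.gcd (Q1 a b s' t') (Q2 a b s' t') : ℤ) with hg'
  have hsat : s - a*t ≠ 0 := fun h => hnd1 (by rw [h, mul_zero])
  have hsat' : s' - a*t' ≠ 0 := fun h => hnd1' (by rw [h, mul_zero])
  have r1 : (4*(a^2-b^2)*(s - a*t)) * s = (a^2-b^2) * (g * (y - x)) := by
    have := id_diff a b s t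
    rw [e1, e2] at this
    linear_combination (a^2-b^2) * this.symm
  have r2 : (4*(a^2-b^2)*(s - a*t)) * t = 2 * (g * (a*y - z)) := by
    have := id_az a b s t
    rw [e2, e3] at this
    linear_combination 2 * this
  have r1' : (4*(a^2-b^2)*(s' - a*t')) * s' = (a^2-b^2) * (g' * (y - x)) := by
    have := id_diff a b s' t'
    rw [e1', e2'] at this
    linear_combination (a^2-b^2) * this.symm
  have r2' : (4*(a^2-b^2)*(s' - a*t')) * t' = 2 * (g' * (a*y - z)) := by
    have := id_az a b s' t'
    rw [e2', e3'] at this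
    linear_combination 2 * this
  set k : ℤ := 4*(a^2-b^2)*(s - a*t) with hk
  set k' : ℤ := 4*(a^2-b^2)*(s' - a*t') with hk'
  have hkne : k ≠ 0 := mul_ne_zero (mul_ne_zero (by norm_num) hD) hsat
  have hkne' : k' ≠ 0 := mul_ne_zero (mul_ne_zero (by norm_num) hD) hsat'
  have hcross : k * k' * (s * t') = k * k' * (s' * t) := by
    have : (k * s) * (k' * t') = (k' * s') * (k * t) := by
      rw [r1, r2, r1', r2']; ring
    linear_combination this
  have hstt : s * t' = s' * t := mul_left_cancel₀ (mul_ne_zero hkne hkne') hcross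
  have hcop : IsCoprime t s := Int.isCoprime_iff_gcd_eq_one.mpr (by rwa [Int.gcd_comm])
  have hcop' : IsCoprime t' s' := Int.isCoprime_iff_gcd_eq_one.mpr (by rwa [Int.gcd_comm])
  have hd1 : t ∣ t' := hcop.dvd_of_dvd_mul_left ⟨s', by linarith [hstt]⟩
  have hd2 : t' ∣ t := hcop'.dvd_of_dvd_mul_left ⟨s, by linarith [hstt]⟩
  have htt : t = t' := Int.dvd_antisymm htpos.le htpos'.le hd1 hd2
  subst htt
  have hss : s = s' := mul_right_cancel₀ htpos.ne' hstt
  rw [hss]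

lemma surjOn (a b : ℤ) (ha : 0 < a) (hb : 0 < b) (hD : a^2 - b^2 ≠ 0) (B : ℝ) :
    Set.SurjOn (fm a b) (Sset a b B) (Mset a b B \ {((1:ℤ), (1:ℤ), a)}) := by
  rintro ⟨x, y, z⟩ ⟨⟨hx, hy, hz, heq, hgxy, hht⟩, hnep⟩
  simp only [Set.mem_singleton_iff, Prod.mk.injEq] at hnep
  have hxyne : x ≠ y := by
    rintro rfl
    have hx1 : x = 1 := by
      have := hgxy
      rw [Int.gcd_self] at this
      omega
    subst hx1
    have hza : z = a := by
      have h0 : 2 * ((z - a) * (z + a)) = 0 := by linear_combination -heq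
      have h0' : (z - a) * (z + a) = 0 := by linarith
      rcases mul_eq_zero.mp h0' with h | h
      · linarith
      · linarith
    exact hnep ⟨rfl, rfl, hza⟩
  have hayz : a * y ≠ z := by
    intro h
    have h0 : (a^2 - b^2) * ((x - y) * (x + y)) = 0 := by
      linear_combination heq - (2*(a*y+z)) * h
    rcases mul_eq_zero.mp h0 with h' | h'
    · exact hD h'
    · rcases mul_eq_zero.mp h' with h'' | h''
      · exact hxyne (by linarith)
      · linarith
  set v1 : ℤ := (a^2 - b^2) * (y - x) with hv1def
  set v2 : ℤ := 2 * (a*y - z) with hv2def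
  have hv1 : v1 ≠ 0 := mul_ne_zero hD (sub_ne_zero.mpr (Ne.symm hxyne))
  have hv2 : v2 ≠ 0 := mul_ne_zero (by norm_num) (sub_ne_zero.mpr hayz)
  have hgne0 : Int.gcd v1 v2 ≠ 0 := fun h => hv1 ((Int.gcd_eq_zero_iff.mp h).1)
  set g : ℤ := (Int.gcd v1 v2 : ℤ) with hgdef
  have hgpos : 0 < g := by positivity
  obtain ⟨s0, hs0⟩ : g ∣ v1 := Int.gcd_dvd_left _ _
  obtain ⟨t0, ht0⟩ : g ∣ v2 := Int.gcd_dvd_right _ _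
  have hst0 : Int.gcd s0 t0 = 1 := coprime_of_div v1 v2 s0 t0 hgpos.ne' hs0 ht0
  have ht0ne : t0 ≠ 0 := by rintro rfl; exact hv2 (by rw [ht0]; ring)
  obtain ⟨ε, hε, hεt⟩ : ∃ ε : ℤ, (ε = 1 ∨ ε = -1) ∧ 0 < ε * t0 := by
    rcases ht0ne.lt_or_gt with h | h
    · exact ⟨-1, Or.inr rfl, by linarith⟩
    · exact ⟨1, Or.inl rfl, by linarith⟩
  set s : ℤ := ε * s0 with hsdef
  set t : ℤ := ε * t0 with htdef
  have htpos : 0 < t := hεt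
  have hst : Int.gcd s t = 1 := by
    rcases hε with rfl | rfl
    · simp only [hsdef, htdef, one_mul]; exact hst0
    · simp only [hsdef, htdef, neg_one_mul, Int.neg_gcd, Int.gcd_neg]; exact hst0
  have hε2 : ε^2 = 1 := by rcases hε with rfl | rfl <;> norm_num
  have hv1e : v1 = (ε * g) * s := by rw [hsdef, hs0]; linear_combination g * s0 * hε2.symm
  have hv2e : v2 = (ε * g) * t := by rw [htdef, ht0]; linear_combination g * t0 * hε2.symm
  -- values of the quadratic forms
  have hDW : (a^2-b^2) * ((a^2-b^2)*x + (a^2+b^2)*y - 2*a*z) < 0 :=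
    W_neg a b x y z ha hx hy hz hD hxyne heq
  obtain ⟨c, hc⟩ : ∃ c : ℤ, c = 4*((a^2-b^2) * ((a^2-b^2)*x + (a^2+b^2)*y - 2*a*z)) := ⟨_, rfl⟩
  have hcneg : c < 0 := by rw [hc]; linarith
  have hQ1v : Q1 a b v1 v2 = c * x := by
    rw [hv1def, hv2def, hc]; unfold Q1; linear_combination (2*b^2 - 2*a^2) * heq
  have hQ2v : Q2 a b v1 v2 = c * y := by
    rw [hv1def, hv2def, hc]; unfold Q2; linear_combination (2*b^2 - 2*a^2) * heq
  have hQ3v : Q3 a b v1 v2 = c * z := by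
    rw [hv1def, hv2def, hc]; unfold Q3; linear_combination (2*a*b^2 - 2*a^3) * heq
  have hQ1st : Q1 a b v1 v2 = g^2 * Q1 a b s t := by
    rw [hv1e, hv2e]; unfold Q1; rcases hε with rfl | rfl <;> ring
  have hQ2st : Q2 a b v1 v2 = g^2 * Q2 a b s t := by
    rw [hv1e, hv2e]; unfold Q2; rcases hε with rfl | rfl <;> ring
  have hQ3st : Q3 a b v1 v2 = g^2 * Q3 a b s t := by
    rw [hv1e, hv2e]; unfold Q3; rcases hε with rfl | rfl <;> ring
  have hgx : g^2 * Q1 a b s t = c * x := by rw [← hQ1st, hQ1v]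
  have hgy : g^2 * Q2 a b s t = c * y := by rw [← hQ2st, hQ2v]
  have hgz : g^2 * Q3 a b s t = c * z := by rw [← hQ3st, hQ3v]
  obtain ⟨α, β, hαβ⟩ : IsCoprime x y := Int.isCoprime_iff_gcd_eq_one.mpr hgxy
  have hμdef : g^2 * (α * Q1 a b s t + β * Q2 a b s t) = c := by
    linear_combination α * hgx + β * hgy + c * hαβ
  set μ : ℤ := α * Q1 a b s t + β * Q2 a b s t with hμ
  have hg2ne : (g:ℤ)^2 ≠ 0 := pow_ne_zero 2 hgpos.ne'
  have hq1 : Q1 a b s t = μ * x := by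
    refine mul_left_cancel₀ hg2ne ?_
    linear_combination hgx - x * hμdef
  have hq2 : Q2 a b s t = μ * y := by
    refine mul_left_cancel₀ hg2ne ?_
    linear_combination hgy - y * hμdef
  have hq3 : Q3 a b s t = μ * z := by
    refine mul_left_cancel₀ hg2ne ?_
    linear_combination hgz - z * hμdef
  have hμneg : μ < 0 := by
    rcases lt_or_ge μ 0 with h | h
    · exact h
    · exfalso
      have h2 : (0:ℤ) ≤ g^2 * μ := mul_nonneg (by positivity) h
      rw [hμdef] at h2
      exact absurd h2 (not_le.mpr hcneg)
  have hμne : μ ≠ 0 := hμneg.ne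
  have hlam : (Int.gcd (Q1 a b s t) (Q2 a b s t) : ℤ) = -μ := by
    rw [hq1, hq2]
    have h' : Int.gcd (μ*x) (μ*y) = μ.natAbs * Int.gcd x y := Int.gcd_mul_left μ x y
    rw [h', hgxy, mul_one]
    exact Int.ofNat_natAbs_of_nonpos hμneg.le
  have hmaxnn : (0:ℝ) ≤ ((max a b : ℤ) : ℝ) := by
    have : (0:ℤ) ≤ max a b := le_trans ha.le (le_max_left a b)
    exact_mod_cast this
  have hmx : ((max a b : ℤ) : ℝ) * (x : ℝ) ≤ B := by
    have hc : ((max x y : ℤ) : ℝ) = max (x:ℝ) (y:ℝ) := by push_cast; rfl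
    rw [hc] at hht
    calc ((max a b : ℤ) : ℝ) * (x : ℝ) ≤ ((max a b : ℤ) : ℝ) * max (x:ℝ) (y:ℝ) :=
          mul_le_mul_of_nonneg_left (le_max_left _ _) hmaxnn
      _ ≤ B := hht
  have hmy : ((max a b : ℤ) : ℝ) * (y : ℝ) ≤ B := by
    have hc : ((max x y : ℤ) : ℝ) = max (x:ℝ) (y:ℝ) := by push_cast; rfl
    rw [hc] at hht
    calc ((max a b : ℤ) : ℝ) * (y : ℝ) ≤ ((max a b : ℤ) : ℝ) * max (x:ℝ) (y:ℝ) :=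
          mul_le_mul_of_nonneg_left (le_max_right _ _) hmaxnn
      _ ≤ B := hht
  have hμR : (0:ℝ) ≤ ((-μ : ℤ) : ℝ) := by
    have : (0:ℤ) ≤ -μ := by linarith
    exact_mod_cast this
  refine ⟨(s, t), ⟨hst, ?_, ?_, htpos, ?_, ?_, ?_, ?_, ?_⟩, ?_⟩
  · -- s * (s - a*t) ≠ 0
    intro hcon
    have h4 := id_diff a b s t
    rw [hq1, hq2, hcon] at h4
    have : μ * (x - y) = 0 := by linarith [h4]
    rcases mul_eq_zero.mp this with h | h
    · exact hμne h
    · exact hxyne (by linarith)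
  · -- 2*a*s ≠ (a^2-b^2)*t
    intro hcon
    have h5 := id_sum a b s t
    rw [hq1, hq2] at h5
    have h6 : μ * (x + y) = 2 * (t * ((a^2-b^2)*t - 2*a*s)) := by linarith [h5]
    rw [← hcon] at h6
    have h7 : μ * (x + y) = 0 := by rw [h6]; ring
    rcases mul_eq_zero.mp h7 with h | h
    · exact hμne h
    · linarith
  · rw [hq3]; exact mul_neg_of_neg_of_pos hμneg hz
  · rw [hq1]; exact mul_neg_of_neg_of_pos hμneg hx
  · rw [hq2]; exact mul_neg_of_neg_of_pos hμneg hy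
  · -- height for Q1
    have e1 : ((-Q1 a b s t : ℤ) : ℝ) = ((-μ : ℤ):ℝ) * (x : ℝ) := by
      rw [hq1]; push_cast; ring
    have e2 : ((Int.gcd (Q1 a b s t) (Q2 a b s t) : ℕ) : ℝ) = ((-μ : ℤ):ℝ) := by
      rw [show (((Int.gcd (Q1 a b s t) (Q2 a b s t) : ℕ)) : ℝ)
          = (((Int.gcd (Q1 a b s t) (Q2 a b s t) : ℤ)) : ℝ) by push_cast; ring, hlam]
    rw [e1, e2]
    calc ((max a b : ℤ) : ℝ) * (((-μ:ℤ):ℝ) * (x:ℝ))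
        = ((-μ:ℤ):ℝ) * (((max a b : ℤ) : ℝ) * (x:ℝ)) := by ring
      _ ≤ ((-μ:ℤ):ℝ) * B := mul_le_mul_of_nonneg_left hmx hμR
  · -- height for Q2
    have e1 : ((-Q2 a b s t : ℤ) : ℝ) = ((-μ : ℤ):ℝ) * (y : ℝ) := by
      rw [hq2]; push_cast; ring
    have e2 : ((Int.gcd (Q1 a b s t) (Q2 a b s t) : ℕ) : ℝ) = ((-μ : ℤ):ℝ) := by
      rw [show (((Int.gcd (Q1 a b s t) (Q2 a b s t) : ℕ)) : ℝ)
          = (((Int.gcd (Q1 a b s t) (Q2 a b s t) : ℤ)) : ℝ) by push_cast; ring, hlam]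
    rw [e1, e2]
    calc ((max a b : ℤ) : ℝ) * (((-μ:ℤ):ℝ) * (y:ℝ))
        = ((-μ:ℤ):ℝ) * (((max a b : ℤ) : ℝ) * (y:ℝ)) := by ring
      _ ≤ ((-μ:ℤ):ℝ) * B := mul_le_mul_of_nonneg_left hmy hμR
  · -- fm (s,t) = (x,y,z)
    have hμne' : -μ ≠ 0 := neg_ne_zero.mpr hμne
    have c1 : -Q1 a b s t / (Int.gcd (Q1 a b s t) (Q2 a b s t) : ℤ) = x := by
      rw [hlam, hq1, show -(μ*x) = -μ * x by ring, Int.mul_ediv_cancel_left _ hμne']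
    have c2 : -Q2 a b s t / (Int.gcd (Q1 a b s t) (Q2 a b s t) : ℤ) = y := by
      rw [hlam, hq2, show -(μ*y) = -μ * y by ring, Int.mul_ediv_cancel_left _ hμne']
    have c3 : -Q3 a b s t / (Int.gcd (Q1 a b s t) (Q2 a b s t) : ℤ) = z := by
      rw [hlam, hq3, show -(μ*z) = -μ * z by ring, Int.mul_ediv_cancel_left _ hμne']
    simp only [fm, c1, c2, c3]

lemma Mset_finite (a b : ℤ) (ha : 0 < a) (B : ℝ) : (Mset a b B).Finite := by
  have hinj : Set.InjOn (fun p : ℤ × ℤ × ℤ => (p.1, p.2.1)) (Mset a b B) := by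
    rintro ⟨x, y, z⟩ ⟨hx, hy, hz, heq, -, -⟩ ⟨x', y', z'⟩ ⟨hx', hy', hz', heq', -, -⟩ h
    simp only [Prod.mk.injEq] at h ⊢
    obtain ⟨h1, h2⟩ := h
    subst h1; subst h2
    refine ⟨rfl, rfl, ?_⟩
    have hz2 : 2 * ((z - z') * (z + z')) = 0 := by
      linear_combination heq' - heq
    have hz2' : (z - z') * (z + z') = 0 := by linarith
    rcases mul_eq_zero.mp hz2' with h | h
    · linarith
    · linarith
  have himg : (fun p : ℤ × ℤ × ℤ => (p.1, p.2.1)) '' (Mset a b B)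
      ⊆ Set.Icc 1 ⌈B⌉ ×ˢ Set.Icc 1 ⌈B⌉ := by
    rintro ⟨u, v⟩ ⟨⟨x, y, z⟩, ⟨hx, hy, hz, heq, hgcd, hht⟩, h⟩
    simp only [Prod.mk.injEq] at h
    obtain ⟨h1, h2⟩ := h
    subst h1; subst h2
    have hmax1 : (1:ℤ) ≤ max a b := le_trans ha (le_max_left a b)
    have hxmax : (x:ℝ) ≤ ((max x y : ℤ):ℝ) := by exact_mod_cast le_max_left x y
    have hymax : (y:ℝ) ≤ ((max x y : ℤ):ℝ) := by exact_mod_cast le_max_right x y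
    have hmaxnn : (0:ℝ) ≤ ((max x y : ℤ):ℝ) := by
      have : (0:ℤ) ≤ max x y := le_trans hx.le (le_max_left x y)
      exact_mod_cast this
    have hone : (1:ℝ) ≤ ((max a b : ℤ):ℝ) := by exact_mod_cast hmax1
    have hxB : (x:ℝ) ≤ B := by
      calc (x:ℝ) ≤ ((max x y : ℤ):ℝ) := hxmax
        _ = 1 * ((max x y : ℤ):ℝ) := by ring
        _ ≤ ((max a b : ℤ):ℝ) * ((max x y : ℤ):ℝ) := mul_le_mul_of_nonneg_right hone hmaxnn
        _ ≤ B := hht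
    have hyB : (y:ℝ) ≤ B := by
      calc (y:ℝ) ≤ ((max x y : ℤ):ℝ) := hymax
        _ = 1 * ((max x y : ℤ):ℝ) := by ring
        _ ≤ ((max a b : ℤ):ℝ) * ((max x y : ℤ):ℝ) := mul_le_mul_of_nonneg_right hone hmaxnn
        _ ≤ B := hht
    constructor
    · refine ⟨hx, ?_⟩
      have : (x:ℝ) ≤ (⌈B⌉ : ℝ) := le_trans hxB (Int.le_ceil B)
      exact_mod_cast this
    · refine ⟨hy, ?_⟩
      have : (y:ℝ) ≤ (⌈B⌉ : ℝ) := le_trans hyB (Int.le_ceil B)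
      exact_mod_cast this
  exact Set.Finite.of_finite_image
    (((Set.finite_Icc (1:ℤ) ⌈B⌉).prod (Set.finite_Icc (1:ℤ) ⌈B⌉)).subset himg) hinj

theorem Mcount_eq_lattice_point_count :
    ∃ C : ℝ, 0 < C ∧ ∀ a b : ℤ, 0 < a → 0 < b → Int.gcd a b = 1 → a * b ≠ 1 →
      ∀ B : ℝ, 1 ≤ B →
        |(Mcount a b B : ℝ) -
            (Set.ncard {p : ℤ × ℤ |
              Int.gcd p.1 p.2 = 1 ∧
              p.1 * (p.1 - a * p.2) ≠ 0 ∧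
              2 * a * p.1 ≠ (a ^ 2 - b ^ 2) * p.2 ∧
              0 < p.2 ∧
              Q3 a b p.1 p.2 < 0 ∧
              Q1 a b p.1 p.2 < 0 ∧ Q2 a b p.1 p.2 < 0 ∧
              ((max a b : ℤ) : ℝ) * ((-Q1 a b p.1 p.2 : ℤ) : ℝ) ≤
                (Int.gcd (Q1 a b p.1 p.2) (Q2 a b p.1 p.2) : ℝ) * B ∧
              ((max a b : ℤ) : ℝ) * ((-Q2 a b p.1 p.2 : ℤ) : ℝ) ≤
                (Int.gcd (Q1 a b p.1 p.2) (Q2 a b p.1 p.2) : ℝ) * B} : ℝ)| ≤ C := by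
  refine ⟨1, one_pos, ?_⟩
  intro a b ha hb hab hne B hB
  have hD : a ^ 2 - b ^ 2 ≠ 0 := by
    intro h
    have h0 : (a - b) * (a + b) = 0 := by linear_combination h
    rcases mul_eq_zero.mp h0 with h' | h'
    · have hab' : a = b := by linarith
      subst hab'
      rw [Int.gcd_self] at hab
      have : a = 1 := by omega
      subst this
      exact hne (by norm_num)
    · linarith
  have hbij : Set.BijOn (fm a b) (Sset a b B) (Mset a b B \ {((1:ℤ), (1:ℤ), a)}) :=
    ⟨mapsTo a b B, injOn a b hD B, surjOn a b ha hb hD B⟩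
  have hfin : (Mset a b B).Finite := Mset_finite a b ha B
  have hMc : Mcount a b B = (Mset a b B).ncard := rfl
  have hSc : Set.ncard {p : ℤ × ℤ |
              Int.gcd p.1 p.2 = 1 ∧
              p.1 * (p.1 - a * p.2) ≠ 0 ∧
              2 * a * p.1 ≠ (a ^ 2 - b ^ 2) * p.2 ∧
              0 < p.2 ∧
              Q3 a b p.1 p.2 < 0 ∧
              Q1 a b p.1 p.2 < 0 ∧ Q2 a b p.1 p.2 < 0 ∧
              ((max a b : ℤ) : ℝ) * ((-Q1 a b p.1 p.2 : ℤ) : ℝ) ≤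
                (Int.gcd (Q1 a b p.1 p.2) (Q2 a b p.1 p.2) : ℝ) * B ∧
              ((max a b : ℤ) : ℝ) * ((-Q2 a b p.1 p.2 : ℤ) : ℝ) ≤
                (Int.gcd (Q1 a b p.1 p.2) (Q2 a b p.1 p.2) : ℝ) * B}
      = (Mset a b B \ {((1:ℤ), (1:ℤ), a)}).ncard := by
    rw [show {p : ℤ × ℤ |
              Int.gcd p.1 p.2 = 1 ∧
              p.1 * (p.1 - a * p.2) ≠ 0 ∧
              2 * a * p.1 ≠ (a ^ 2 - b ^ 2) * p.2 ∧
              0 < p.2 ∧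
              Q3 a b p.1 p.2 < 0 ∧
              Q1 a b p.1 p.2 < 0 ∧ Q2 a b p.1 p.2 < 0 ∧
              ((max a b : ℤ) : ℝ) * ((-Q1 a b p.1 p.2 : ℤ) : ℝ) ≤
                (Int.gcd (Q1 a b p.1 p.2) (Q2 a b p.1 p.2) : ℝ) * B ∧
              ((max a b : ℤ) : ℝ) * ((-Q2 a b p.1 p.2 : ℤ) : ℝ) ≤
                (Int.gcd (Q1 a b p.1 p.2) (Q2 a b p.1 p.2) : ℝ) * B} = Sset a b B from rfl]
    rw [← hbij.image_eq, Set.ncard_image_of_injOn hbij.injOn]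
  rw [hMc, hSc]
  by_cases hpt : ((1:ℤ), (1:ℤ), a) ∈ Mset a b B
  · have h1 : (Mset a b B \ {((1:ℤ), (1:ℤ), a)}).ncard = (Mset a b B).ncard - 1 :=
      Set.ncard_diff_singleton_of_mem hpt
    have hpos : 1 ≤ (Mset a b B).ncard := by
      have : 0 < (Mset a b B).ncard := (Set.ncard_pos hfin).mpr ⟨_, hpt⟩
      omega
    rw [h1]
    rw [Nat.cast_sub hpos]
    simp only [Nat.cast_one]
    rw [abs_of_nonneg (by linarith : (0:ℝ) ≤ ((Mset a b B).ncard : ℝ) - (((Mset a b B).ncard : ℝ) - 1))]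
    linarith
  · rw [Set.diff_singleton_eq_self hpt]
    rw [sub_self, abs_zero]
    norm_num
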